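/- arXiv:2503.03415 — 4 statements merged into one kernel-verified Lean document; each statement's English description precedes it below -/
import Mathlib

section
/- Let $z_1,\dots,z_m$ be $m$ distinct points in the open unit disk $\mathbb{D}\subset\mathbb{C}$. Then the $m\times m$ matrix with $(i,j)$ entry $\frac{1}{1-\overline{z_i}z_j}$ is invertible. -/
/-- For `m` distinct points in the open unit disk, the matrix with
entries `1/(1 - conj z_i * z_j)` is invertible. -/
theorem stmt_0 (m : ℕ) (z : Fin m → ℂ) (hz : ∀ i, ‖z i‖ < 1)
    (hinj : Function.Injective z) :
    IsUnit (Matrix.of fun i j : Fin m => (1 - (starRingEnd ℂ) (z i) * z j)⁻¹) := by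
  set M : Matrix (Fin m) (Fin m) ℂ :=
    Matrix.of fun i j : Fin m => (1 - (starRingEnd ℂ) (z i) * z j)⁻¹ with hM
  have hξ : ∀ i j : Fin m, ‖(starRingEnd ℂ) (z i) * z j‖ < 1 := by
    intro i j
    rw [norm_mul, RCLike.norm_conj]
    nlinarith [hz i, hz j, norm_nonneg (z i), norm_nonneg (z j)]
  rw [Matrix.isUnit_iff_isUnit_det, isUnit_iff_ne_zero]
  intro hdet
  obtain ⟨v, hv0, hmul⟩ := (Matrix.exists_mulVec_eq_zero_iff).mpr hdet
  have hq : dotProduct (star v) (M.mulVec v) = 0 := by rw [hmul, dotProduct_zero]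
  set s : ℕ → ℂ := fun n => ∑ i, v i * z i ^ n with hs
  have hsummand : ∀ i j : Fin m,
      Summable (fun n : ℕ => (starRingEnd ℂ) (v i) * v j * ((starRingEnd ℂ) (z i) * z j) ^ n) :=
    fun i j => (summable_geometric_of_norm_lt_one (hξ i j)).mul_left _
  have hexp : ∀ n : ℕ, (starRingEnd ℂ) (s n) * s n
      = ∑ i, ∑ j, (starRingEnd ℂ) (v i) * v j * ((starRingEnd ℂ) (z i) * z j) ^ n := by
    intro n
    rw [hs]
    simp only [map_sum, map_mul, map_pow, Finset.sum_mul_sum]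
    refine Finset.sum_congr rfl fun i _ => Finset.sum_congr rfl fun j _ => ?_
    ring
  have key : dotProduct (star v) (M.mulVec v) = ∑' n : ℕ, ((starRingEnd ℂ) (s n)) * s n := by
    have h1 : dotProduct (star v) (M.mulVec v)
        = ∑ i, ∑ j, (starRingEnd ℂ) (v i) * v j * (1 - (starRingEnd ℂ) (z i) * z j)⁻¹ := by
      simp only [dotProduct, Matrix.mulVec, dotProduct, Pi.star_apply,
        Finset.mul_sum, hM, Matrix.of_apply]
      refine Finset.sum_congr rfl fun i _ => Finset.sum_congr rfl fun j _ => ?_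
      simp [Complex.star_def]; ring
    rw [h1]
    have h2 : ∀ i j : Fin m,
        (starRingEnd ℂ) (v i) * v j * (1 - (starRingEnd ℂ) (z i) * z j)⁻¹
          = ∑' n : ℕ, (starRingEnd ℂ) (v i) * v j * ((starRingEnd ℂ) (z i) * z j) ^ n := by
      intro i j
      rw [tsum_mul_left, tsum_geometric_of_norm_lt_one (hξ i j)]
    simp only [h2]
    simp only [fun i : Fin m => (Summable.tsum_finsetSum (fun j (_ : j ∈ Finset.univ) => hsummand i j)).symm]
    rw [← Summable.tsum_finsetSum (fun i (_ : i ∈ Finset.univ) => summable_sum (fun j _ => hsummand i j))]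
    exact tsum_congr fun n => (hexp n).symm
  have hsumC : Summable (fun n : ℕ => ((starRingEnd ℂ) (s n)) * s n) := by
    simp only [hexp]
    exact summable_sum (fun i _ => summable_sum (fun j _ => hsummand i j))
  have hcoe : ∀ n : ℕ, (starRingEnd ℂ) (s n) * s n = ((‖s n‖ ^ 2 : ℝ) : ℂ) := fun n =>
    Complex.conj_mul' (s n) |>.trans
      (by norm_num)
  have hsumR : Summable (fun n : ℕ => ‖s n‖ ^ 2) := by
    rw [← Complex.summable_ofReal]
    simpa only [hcoe] using hsumC
  have htsum0 : ∑' n : ℕ, ‖s n‖ ^ 2 = 0 := by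
    have : ((∑' n : ℕ, ‖s n‖ ^ 2 : ℝ) : ℂ) = 0 := by
      rw [Complex.ofReal_tsum]
      simp only [← hcoe]
      rw [← key, hq]
    exact_mod_cast this
  have hsz : ∀ n : ℕ, s n = 0 := by
    intro n
    have h0 : ∀ k : ℕ, 0 ≤ ‖s k‖ ^ 2 := fun k => sq_nonneg _
    have hle := Summable.le_tsum hsumR n (fun k _ => h0 k)
    rw [htsum0] at hle
    have : ‖s n‖ ^ 2 = 0 := le_antisymm hle (h0 n)
    simpa [pow_eq_zero_iff] using this
  -- Vandermonde shows v = 0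
  have hvdet : (Matrix.vandermonde z).transpose.det ≠ 0 := by
    rw [Matrix.det_transpose]
    exact Matrix.det_vandermonde_ne_zero_iff.mpr hinj
  have : ∃ w, w ≠ 0 ∧ (Matrix.vandermonde z).transpose.mulVec w = 0 := by
    refine ⟨v, hv0, ?_⟩
    funext j
    have := hsz (j : ℕ)
    simp only [Matrix.mulVec, dotProduct, Matrix.transpose_apply,
      Matrix.vandermonde, Matrix.of_apply, Pi.zero_apply]
    rw [hs] at this
    rw [← this]
    exact Finset.sum_congr rfl fun i _ => mul_comm _ _
  exact hvdet (Matrix.exists_mulVec_eq_zero_iff.mp this)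
end

section
/- Let $B(z)=\prod_{j=1}^m \frac{z_j-z}{1-\overline{z_j}z}$ be a finite Blaschke product with $z_j\in\mathbb{D}$, and define $B^*(z)=\overline{B(\overline z)}$. Let $S_\beta$ be the backward shift on a weighted Hardy space $H^2_\beta$ with $w_k\to 1$ and $M_z$ the forward shift (multiplication by $z$). Then $B^*(S_\beta)\,B(M_z)=\mathbf{I}$. -/
open scoped ENNReal

private lemma list_prod_mul_eq_one {G : Type*} [Monoid G] :
    ∀ (m : ℕ) (A B : Fin m → G), (∀ i j, Commute (A i) (A j)) →
      (∀ j, A j * B j = 1) → (List.ofFn A).prod * (List.ofFn B).prod = 1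
  | 0, A, B, _, _ => by simp
  | (m + 1), A, B, hcomm, hinv => by
    rw [List.ofFn_succ (f := A), List.ofFn_succ (f := B), List.prod_cons, List.prod_cons]
    have hc : Commute (A 0) (List.ofFn fun i : Fin m => A i.succ).prod := by
      refine Commute.list_prod_right _ _ ?_
      intro x hx
      rw [List.mem_ofFn] at hx
      obtain ⟨i, rfl⟩ := hx
      exact hcomm 0 i.succ
    rw [hc.eq, mul_assoc, ← mul_assoc (A 0), hinv 0, one_mul]
    exact list_prod_mul_eq_one m _ _ (fun i j => hcomm i.succ j.succ) (fun j => hinv j.succ)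

private lemma comm_ring_inverse {A : Type*} [Ring A] {x u : A} (hu : IsUnit u)
    (hc : Commute x u) : Commute x (Ring.inverse u) := by
  obtain ⟨v, rfl⟩ := hu
  rw [Ring.inverse_unit]
  exact hc.units_inv_right

private lemma isUnit_one_sub_of_pow {A : Type*} [Ring A] (x : A) (n : ℕ)
    (hu : IsUnit (1 - x ^ n)) : IsUnit (1 - x) := by
  obtain ⟨u, hu'⟩ := hu
  have hc0 : Commute (1 - x) (1 - x ^ n) := by
    have c1 : Commute x (x ^ n) := (Commute.refl x).pow_right n
    exact ((Commute.one_left (1 - x ^ n)).sub_left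
      ((Commute.one_right x).sub_right c1))
  have hc : Commute (1 - x) (u : A) := by rw [hu']; exact hc0
  have hcinv : Commute (1 - x) ((↑u⁻¹ : A)) := hc.units_inv_right
  set G := ∑ i ∈ Finset.range n, x ^ i with hG
  have h1 : (1 - x) * G = 1 - x ^ n := mul_neg_geom_sum x n
  have h2 : G * (1 - x) = 1 - x ^ n := geom_sum_mul_neg x n
  refine isUnit_iff_exists.mpr ⟨G * ↑u⁻¹, ?_, ?_⟩
  · rw [← mul_assoc, h1, ← hu', Units.mul_inv]
  · rw [mul_assoc, ← hcinv.eq, ← mul_assoc, h2, ← hu', Units.mul_inv]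

private lemma ratio_bound (γ : ℕ → ℝ) (hpos : ∀ k, 0 < γ k)
    (hr : Filter.Tendsto (fun k => γ (k + 1) / γ k) Filter.atTop (nhds 1))
    {ε : ℝ} (hε : 0 < ε) :
    ∃ C : ℝ, 0 < C ∧ ∀ k n : ℕ, γ (k + n) / γ k ≤ C * (1 + ε) ^ n := by
  have h1ε : (1 : ℝ) ≤ 1 + ε := by linarith
  obtain ⟨K, hK⟩ : ∃ K, ∀ k ≥ K, γ (k + 1) / γ k ≤ 1 + ε :=
    Filter.eventually_atTop.mp (hr.eventually_le_const (by linarith))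
  have stepA : ∀ n k, K ≤ k → γ (k + n) / γ k ≤ (1 + ε) ^ n := by
    intro n
    induction n with
    | zero => intro k _; simp [div_self (hpos k).ne']
    | succ n ih =>
      intro k hk
      have h1 := hK k hk
      have h2 := ih (k + 1) (by omega)
      have heq : γ (k + (n + 1)) / γ k = γ (k + 1 + n) / γ (k + 1) * (γ (k + 1) / γ k) := by
        rw [show k + (n + 1) = k + 1 + n by omega]
        field_simp
        rw [mul_div_mul_right _ _ (hpos (k + 1)).ne']
      rw [heq, pow_succ]
      exact mul_le_mul h2 h1 (div_nonneg (hpos _).le (hpos _).le) (pow_nonneg (by linarith) n)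
  have hmem : ∀ a : ℕ, a ≤ K → a ∈ Finset.range (K + 1) := fun a ha =>
    Finset.mem_range.mpr (by omega)
  have hs : (Finset.range (K + 1)).Nonempty := Finset.nonempty_range_add_one
  set Mx := (Finset.range (K + 1)).sup' hs γ with hMx
  set mn := (Finset.range (K + 1)).inf' hs γ with hmn'
  have hmn : 0 < mn := (Finset.lt_inf'_iff hs).mpr fun i _ => hpos i
  have hMx0 : 0 < Mx := lt_of_lt_of_le (hpos 0) (Finset.le_sup' γ (hmem 0 (by omega)))
  have hC1 : ∀ a b : ℕ, a ≤ K → b ≤ K → γ a / γ b ≤ Mx / mn := fun a b ha hb =>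
    div_le_div₀ hMx0.le (Finset.le_sup' γ (hmem a ha)) hmn (Finset.inf'_le γ (hmem b hb))
  have hCpos : 0 < Mx / mn := div_pos hMx0 hmn
  have hC_ge1 : (1 : ℝ) ≤ Mx / mn := by
    rw [le_div_iff₀ hmn, one_mul]
    exact (Finset.inf'_le γ (hmem 0 (by omega))).trans (Finset.le_sup' γ (hmem 0 (by omega)))
  refine ⟨Mx / mn, hCpos, fun k n => ?_⟩
  have hpow1 : (1 : ℝ) ≤ (1 + ε) ^ n := by
    calc (1 : ℝ) = 1 ^ n := (one_pow n).symm
    _ ≤ (1 + ε) ^ n := pow_le_pow_left₀ zero_le_one h1ε n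
  by_cases hk : K ≤ k
  · exact (stepA n k hk).trans (le_mul_of_one_le_left (pow_nonneg (by linarith) n) hC_ge1)
  · push_neg at hk
    by_cases hkn : k + n ≤ K
    · calc γ (k + n) / γ k ≤ Mx / mn := hC1 (k + n) k (by omega) (by omega)
      _ ≤ Mx / mn * (1 + ε) ^ n := le_mul_of_one_le_right hCpos.le hpow1
    · push_neg at hkn
      have heq : γ (k + n) / γ k = γ (K + (k + n - K)) / γ K * (γ K / γ k) := by
        rw [show K + (k + n - K) = k + n by omega]
        field_simp
        rw [mul_div_mul_right _ _ (hpos K).ne']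
      rw [heq]
      have h1 : γ (K + (k + n - K)) / γ K ≤ (1 + ε) ^ (k + n - K) := stepA _ K le_rfl
      have h1' : ((1 : ℝ) + ε) ^ (k + n - K) ≤ (1 + ε) ^ n :=
        pow_le_pow_right₀ h1ε (by omega)
      have h2 : γ K / γ k ≤ Mx / mn := hC1 K k le_rfl (by omega)
      calc γ (K + (k + n - K)) / γ K * (γ K / γ k) ≤ (1 + ε) ^ n * (Mx / mn) :=
            mul_le_mul (h1.trans h1') h2 (div_nonneg (hpos _).le (hpos _).le)
              (pow_nonneg (by linarith) n)
        _ = Mx / mn * (1 + ε) ^ n := mul_comm _ _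

private lemma lp_sq (h : lp (fun _ : ℕ => ℂ) 2) :
    Summable (fun k => ‖h k‖ ^ 2) ∧ ‖h‖ ^ 2 = ∑' k, ‖h k‖ ^ 2 := by
  have hp : 0 < (2 : ℝ≥0∞).toReal := by simp [ENNReal.toReal_ofNat]
  have h1 := lp.norm_rpow_eq_tsum hp h
  have h2 := (lp.memℓp h).summable hp
  have e : (2 : ℝ≥0∞).toReal = ((2 : ℕ) : ℝ) := by simp [ENNReal.toReal_ofNat]
  rw [e] at h1 h2
  simp only [Real.rpow_natCast] at h1 h2
  exact ⟨h2, h1⟩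

private lemma sq_le_imp {a b : ℝ} (ha : 0 ≤ a) (hb : 0 ≤ b) (h : a ^ 2 ≤ b ^ 2) : a ≤ b := by
  nlinarith

private lemma lp_opbound_shift (g f : lp (fun _ : ℕ => ℂ) 2) (n : ℕ) (D : ℝ) (hD : 0 ≤ D)
    (hcoef : ∀ k, ‖g k‖ ≤ D * ‖f (k + n)‖) : ‖g‖ ≤ D * ‖f‖ := by
  obtain ⟨hgs, hgn⟩ := lp_sq g
  obtain ⟨hfs, hfn⟩ := lp_sq f
  have hfs' : Summable fun k => ‖f (k + n)‖ ^ 2 := hfs.comp_injective (add_left_injective n)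
  have h1 : ∑' k, ‖g k‖ ^ 2 ≤ ∑' k, D ^ 2 * ‖f (k + n)‖ ^ 2 := by
    refine Summable.tsum_le_tsum (fun k => ?_) hgs (hfs'.mul_left _)
    have h := hcoef k
    nlinarith [norm_nonneg (g k), norm_nonneg (f (k + n))]
  have h2 : ∑' k, ‖f (k + n)‖ ^ 2 ≤ ∑' k, ‖f k‖ ^ 2 :=
    Summable.tsum_le_tsum_of_inj (f := fun k => ‖f (k + n)‖ ^ 2) (g := fun c => ‖f c‖ ^ 2)
      (· + n) (add_left_injective n) (fun c _ => by positivity)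
      (fun k => le_rfl) hfs' hfs
  refine sq_le_imp (norm_nonneg g) (mul_nonneg hD (norm_nonneg f)) ?_
  rw [hgn, mul_pow]
  calc ∑' k, ‖g k‖ ^ 2 ≤ D ^ 2 * ∑' k, ‖f (k + n)‖ ^ 2 := by rw [← tsum_mul_left]; exact h1
    _ ≤ D ^ 2 * ∑' k, ‖f k‖ ^ 2 := mul_le_mul_of_nonneg_left h2 (by positivity)
    _ = D ^ 2 * ‖f‖ ^ 2 := by rw [hfn]

private lemma lp_opbound_mshift (g f : lp (fun _ : ℕ => ℂ) 2) (n : ℕ) (D : ℝ) (hD : 0 ≤ D)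
    (h0 : ∀ k, k < n → g k = 0) (hcoef : ∀ k, ‖g (k + n)‖ ≤ D * ‖f k‖) : ‖g‖ ≤ D * ‖f‖ := by
  obtain ⟨hgs, hgn⟩ := lp_sq g
  obtain ⟨hfs, hfn⟩ := lp_sq f
  have hgs' : Summable fun k => ‖g (k + n)‖ ^ 2 := hgs.comp_injective (add_left_injective n)
  have heq : ∑' k, ‖g (k + n)‖ ^ 2 = ∑' k, ‖g k‖ ^ 2 := by
    refine Function.Injective.tsum_eq (g := (· + n)) (f := fun k => ‖g k‖ ^ 2)
      (add_left_injective n) ?_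
    intro c hc
    rw [Function.mem_support] at hc
    by_contra hcr
    have hcn : c < n := by
      by_contra h'
      exact hcr ⟨c - n, by show c - n + n = c; omega⟩
    exact hc (by rw [h0 c hcn]; simp)
  have h1 : ∑' k, ‖g (k + n)‖ ^ 2 ≤ ∑' k, D ^ 2 * ‖f k‖ ^ 2 := by
    refine Summable.tsum_le_tsum (fun k => ?_) hgs' (hfs.mul_left _)
    have h := hcoef k
    nlinarith [norm_nonneg (g (k + n)), norm_nonneg (f k)]
  refine sq_le_imp (norm_nonneg g) (mul_nonneg hD (norm_nonneg f)) ?_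
  rw [hgn, mul_pow, ← heq]
  calc ∑' k, ‖g (k + n)‖ ^ 2 ≤ D ^ 2 * ∑' k, ‖f k‖ ^ 2 := by rw [← tsum_mul_left]; exact h1
    _ = D ^ 2 * ‖f‖ ^ 2 := by rw [hfn]

private lemma moebius_pair {A : Type*} [Ring A] (P Q u v : A) (hu : IsUnit u) (hv : IsUnit v)
    (hPu : Commute P u) (hkey : P * Q = u * v) :
    P * Ring.inverse u * (Q * Ring.inverse v) = 1 := by
  have h1 : Commute P (Ring.inverse u) := comm_ring_inverse hu hPu
  calc P * Ring.inverse u * (Q * Ring.inverse v)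
      = Ring.inverse u * (P * Q * Ring.inverse v) := by rw [h1.eq, mul_assoc, mul_assoc]
    _ = Ring.inverse u * (u * (v * Ring.inverse v)) := by rw [hkey, mul_assoc]
    _ = 1 := by rw [Ring.mul_inverse_cancel _ hv, mul_one, Ring.inverse_mul_cancel _ hu]


private lemma isUnit_one_sub_smul {A : Type*} [NormedRing A] [NormedSpace ℂ A]
    [SMulCommClass ℂ A A] [IsScalarTower ℂ A A] [CompleteSpace A] (T : A)
    (hT : ∀ ε : ℝ, 0 < ε → ∃ C, 0 < C ∧ ∀ n, ‖T ^ n‖ ≤ C * (1 + ε) ^ n)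
    (α : ℂ) (hα : ‖α‖ < 1) : IsUnit (1 - α • T) := by
  set r := ‖α‖ with hr
  have hr0 : 0 ≤ r := norm_nonneg α
  have hεpos : 0 < (1 - r) / (1 + r) := by
    apply div_pos <;> linarith
  obtain ⟨C, hC0, hC⟩ := hT _ hεpos
  set q := r * (1 + (1 - r) / (1 + r)) with hq
  have hq0 : 0 ≤ q := by positivity
  have hq1 : q < 1 := by
    have hq' : q = 2 * r / (1 + r) := by
      rw [hq]; field_simp; ring
    rw [hq', div_lt_one (by linarith)]
    linarith
  have htend : Filter.Tendsto (fun n : ℕ => C * q ^ n) Filter.atTop (nhds 0) := by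
    have := tendsto_pow_atTop_nhds_zero_of_lt_one hq0 hq1
    simpa using this.const_mul C
  obtain ⟨n, hn1, hn0⟩ :=
    ((htend.eventually_lt_const one_pos).and (Filter.eventually_gt_atTop 0)).exists
  have hpown : ‖(α • T) ^ n‖ < 1 := by
    rw [smul_pow]
    calc ‖α ^ n • T ^ n‖ ≤ ‖α ^ n‖ * ‖T ^ n‖ := norm_smul_le _ _
      _ ≤ r ^ n * (C * (1 + (1 - r) / (1 + r)) ^ n) := by
          rw [norm_pow]
          exact mul_le_mul_of_nonneg_left (hC n) (by positivity)
      _ = C * q ^ n := by rw [hq, mul_pow]; ring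
      _ < 1 := hn1
  exact isUnit_one_sub_of_pow (α • T) n ⟨Units.oneSub _ hpown, rfl⟩

private lemma final_alg {A : Type*} [Ring A] [Module ℂ A]
    [SMulCommClass ℂ A A] [IsScalarTower ℂ A A] (S M : A) (hSM : S * M = 1)
    (m : ℕ) (z : Fin m → ℂ) (huS : ∀ j, IsUnit (1 - z j • S))
    (huM : ∀ j, IsUnit (1 - (starRingEnd ℂ (z j)) • M)) :
    (List.ofFn fun j : Fin m =>
        ((starRingEnd ℂ (z j)) • (1 : A) - S) * Ring.inverse (1 - z j • S)).prod *
      (List.ofFn fun j : Fin m =>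
        (z j • (1 : A) - M) * Ring.inverse (1 - (starRingEnd ℂ (z j)) • M)).prod = 1 := by
  have hclin : ∀ a b c d : ℂ, Commute (a • (1 : A) - b • S) (c • (1 : A) - d • S) := by
    intro a b c d
    have h1 : Commute (1 : A) (c • (1 : A) - d • S) := Commute.one_left _
    have h2 : Commute S (c • (1 : A) - d • S) :=
      (((Commute.one_right S).smul_right c).sub_right ((Commute.refl S).smul_right d))
    exact (h1.smul_left a).sub_left (h2.smul_left b)
  refine list_prod_mul_eq_one m _ _ ?_ ?_
  · intro i j
    have hPP : Commute ((starRingEnd ℂ (z i)) • (1 : A) - S)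
        ((starRingEnd ℂ (z j)) • (1 : A) - S) := by
      simpa [one_smul] using hclin (starRingEnd ℂ (z i)) 1 (starRingEnd ℂ (z j)) 1
    have hPu : ∀ a b : ℂ, Commute (a • (1 : A) - S) (1 - b • S) := by
      intro a b
      simpa [one_smul] using hclin a 1 1 b
    have huu : ∀ a b : ℂ, Commute ((1 : A) - a • S) (1 - b • S) := by
      intro a b
      simpa [one_smul] using hclin 1 a 1 b
    have hPQ : Commute ((starRingEnd ℂ (z i)) • (1 : A) - S)
        (Ring.inverse (1 - z j • S)) :=
      comm_ring_inverse (huS j) (hPu _ _)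
    have hQP : Commute (Ring.inverse (1 - z i • S))
        ((starRingEnd ℂ (z j)) • (1 : A) - S) :=
      (comm_ring_inverse (huS i) (hPu _ _)).symm
    have hQQ : Commute (Ring.inverse (1 - z i • S)) (Ring.inverse (1 - z j • S)) :=
      comm_ring_inverse (huS j) ((comm_ring_inverse (huS i) (huu _ _).symm).symm)
    exact (hPP.mul_right hPQ).mul_left (hQP.mul_right hQQ)
  · intro j
    have hkey : ((starRingEnd ℂ (z j)) • (1 : A) - S) * (z j • (1 : A) - M)
        = (1 - z j • S) * (1 - (starRingEnd ℂ (z j)) • M) := by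
      simp only [sub_mul, mul_sub, smul_mul_assoc, mul_smul_comm, one_mul, mul_one,
        smul_sub, smul_smul, hSM]
      rw [mul_comm (z j) (starRingEnd ℂ (z j))]
      abel
    have hPu : Commute ((starRingEnd ℂ (z j)) • (1 : A) - S) (1 - z j • S) := by
      simpa [one_smul] using hclin (starRingEnd ℂ (z j)) 1 1 (z j)
    exact moebius_pair _ _ _ _ (huS j) (huM j) hPu hkey

set_option maxHeartbeats 1000000 in
/-- `B*(S_β) B(M_z) = I` for a finite Blaschke product
`B(z) = ∏_j (z_j - z)/(1 - conj z_j · z)`, on the coefficient ℓ²-model of the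
weighted Hardy space `H²_β` (`w_k → 1`): `B*(S_β) = ∏_j (conj z_j - S)(1 - z_j S)⁻¹`
and `B(M_z) = ∏_j (z_j - M)(1 - conj z_j · M)⁻¹`. -/
theorem stmt_4 (β : ℕ → ℝ) (hβ0 : β 0 = 1) (hβ : ∀ k, 0 < β k)
    (hw : Filter.Tendsto (fun k => β (k + 1) / β k) Filter.atTop (nhds 1))
    (m : ℕ) (z : Fin m → ℂ) (hz : ∀ j, ‖z j‖ < 1)
    (S M : lp (fun _ : ℕ => ℂ) 2 →L[ℂ] lp (fun _ : ℕ => ℂ) 2)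
    (hS : ∀ f : lp (fun _ : ℕ => ℂ) 2, ∀ k : ℕ,
      S f k = ((β k / β (k + 1) : ℝ) : ℂ) * f (k + 1))
    (hM0 : ∀ f : lp (fun _ : ℕ => ℂ) 2, M f 0 = 0)
    (hM : ∀ f : lp (fun _ : ℕ => ℂ) 2, ∀ k : ℕ,
      M f (k + 1) = ((β (k + 1) / β k : ℝ) : ℂ) * f k) :
    (List.ofFn fun j : Fin m =>
        ((starRingEnd ℂ (z j)) • (1 : lp (fun _ : ℕ => ℂ) 2 →L[ℂ] lp (fun _ : ℕ => ℂ) 2) - S) *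
          Ring.inverse (1 - z j • S)).prod *
      (List.ofFn fun j : Fin m =>
        (z j • (1 : lp (fun _ : ℕ => ℂ) 2 →L[ℂ] lp (fun _ : ℕ => ℂ) 2) - M) *
          Ring.inverse (1 - (starRingEnd ℂ (z j)) • M)).prod = 1 := by
  have hβne : ∀ k, β k ≠ 0 := fun k => (hβ k).ne'
  -- S * M = 1
  have hSM : S * M = 1 := by
    ext f k
    rw [ContinuousLinearMap.mul_apply, ContinuousLinearMap.one_apply, hS (M f) k, hM f k,
      ← mul_assoc, ← Complex.ofReal_mul]
    have : β k / β (k + 1) * (β (k + 1) / β k) = 1 := by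
      rw [div_mul_div_comm, mul_comm (β k)]
      exact div_self (mul_ne_zero (hβne _) (hβne _))
    rw [this, Complex.ofReal_one, one_mul]
  -- powers of S
  have hSpow : ∀ n (f : lp (fun _ : ℕ => ℂ) 2) (k : ℕ),
      (S ^ n) f k = ((β k / β (k + n) : ℝ) : ℂ) * f (k + n) := by
    intro n
    induction n with
    | zero =>
      intro f k
      simp [div_self (hβne k)]
    | succ n ih =>
      intro f k
      rw [pow_succ, ContinuousLinearMap.mul_apply, ih (S f) k, hS f (k + n),
        ← mul_assoc, ← Complex.ofReal_mul]
      have : β k / β (k + n) * (β (k + n) / β (k + n + 1)) = β k / β (k + (n + 1)) := by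
        rw [show k + (n + 1) = k + n + 1 by omega, div_mul_div_comm,
          mul_comm (β k) (β (k + n)), mul_div_mul_left _ _ (hβne (k + n))]
      rw [this]
      rfl
  -- powers of M
  have hMpow : ∀ n (f : lp (fun _ : ℕ => ℂ) 2) (k : ℕ),
      (M ^ n) f (k + n) = ((β (k + n) / β k : ℝ) : ℂ) * f k := by
    intro n
    induction n with
    | zero =>
      intro f k
      simp [div_self (hβne k)]
    | succ n ih =>
      intro f k
      rw [pow_succ, ContinuousLinearMap.mul_apply, show k + (n + 1) = (k + 1) + n by omega,
        ih (M f) (k + 1), hM f k, ← mul_assoc, ← Complex.ofReal_mul]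
      have : β (k + 1 + n) / β (k + 1) * (β (k + 1) / β k) = β (k + (n + 1)) / β k := by
        rw [show k + (n + 1) = k + 1 + n by omega, div_mul_div_comm,
          mul_comm (β (k + 1 + n)) (β (k + 1)), mul_div_mul_left _ _ (hβne (k + 1))]
      rw [show k + 1 + n = k + (n + 1) by omega] at this ⊢
      rw [this]
  have hMpow0 : ∀ n (f : lp (fun _ : ℕ => ℂ) 2) (k : ℕ), k < n → (M ^ n) f k = 0 := by
    intro n
    induction n with
    | zero => intro f k hk; omega
    | succ n ih =>
      intro f k hk
      rw [pow_succ, ContinuousLinearMap.mul_apply]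
      rcases Nat.lt_or_ge k n with h | h
      · exact ih (M f) k h
      · have hkn : k = n := by omega
        rw [hkn]
        have h2 := hMpow n (M f) 0
        rw [Nat.zero_add] at h2
        rw [h2, hM0 f, mul_zero]
  -- operator norm bounds on powers
  have normS : ∀ ε : ℝ, 0 < ε → ∃ C, 0 < C ∧ ∀ n, ‖S ^ n‖ ≤ C * (1 + ε) ^ n := by
    intro ε hε
    have htend : Filter.Tendsto (fun k => (β (k + 1))⁻¹ / (β k)⁻¹) Filter.atTop (nhds 1) := by
      have h1 : (fun k => (β (k + 1))⁻¹ / (β k)⁻¹) = fun k => (β (k + 1) / β k)⁻¹ := by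
        funext k; field_simp
      rw [h1]
      simpa using hw.inv₀ one_ne_zero
    obtain ⟨C, hC0, hC⟩ := ratio_bound (fun k => (β k)⁻¹) (fun k => inv_pos.2 (hβ k)) htend hε
    refine ⟨C, hC0, fun n => ?_⟩
    have hD : 0 ≤ C * (1 + ε) ^ n := by positivity
    refine ContinuousLinearMap.opNorm_le_bound _ hD fun f => ?_
    refine lp_opbound_shift ((S ^ n) f) f n _ hD fun k => ?_
    rw [hSpow n f k, norm_mul, Complex.norm_real, Real.norm_eq_abs,
      abs_of_pos (div_pos (hβ _) (hβ _))]
    have e : (β (k + n))⁻¹ / (β k)⁻¹ = β k / β (k + n) := by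
      rw [div_eq_mul_inv, inv_inv, div_eq_mul_inv, mul_comm]
    have hr : β k / β (k + n) ≤ C * (1 + ε) ^ n := by rw [← e]; exact hC k n
    exact mul_le_mul_of_nonneg_right hr (norm_nonneg _)
  have normM : ∀ ε : ℝ, 0 < ε → ∃ C, 0 < C ∧ ∀ n, ‖M ^ n‖ ≤ C * (1 + ε) ^ n := by
    intro ε hε
    obtain ⟨C, hC0, hC⟩ := ratio_bound β hβ hw hε
    refine ⟨C, hC0, fun n => ?_⟩
    have hD : 0 ≤ C * (1 + ε) ^ n := by positivity
    refine ContinuousLinearMap.opNorm_le_bound _ hD fun f => ?_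
    refine lp_opbound_mshift ((M ^ n) f) f n _ hD (fun k hk => hMpow0 n f k hk) fun k => ?_
    rw [hMpow n f k, norm_mul, Complex.norm_real, Real.norm_eq_abs,
      abs_of_pos (div_pos (hβ _) (hβ _))]
    exact mul_le_mul_of_nonneg_right (hC k n) (norm_nonneg _)
  -- conclude
  have huS : ∀ j, IsUnit (1 - z j • S) := fun j =>
    isUnit_one_sub_smul S normS (z j) (hz j)
  have huM : ∀ j, IsUnit (1 - (starRingEnd ℂ (z j)) • M) := fun j =>
    isUnit_one_sub_smul M normM _ (by simpa using hz j)
  exact final_alg S M hSM m z huS huM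
end

section
/- Let $H^2_\beta$ be a weighted Hardy space with $w_k\to 1$ and $S_\beta$ the backward shift. Then the commutant $\{S_\beta\}' = \{g(S_\beta): g\in H^\infty_{\beta^{-1}}\}$, i.e., a bounded operator $W$ on $H^2_\beta$ satisfies $WS_\beta=S_\beta W$ if and only if $W = T_{\beta^{-1},\beta} M_g^* T_{\beta,\beta^{-1}}$ for some $g\in H^\infty_{\beta^{-1}}$. -/
open scoped ComplexConjugate

noncomputable section Stmt10Aux

private abbrev H2 := lp (fun _ : ℕ => ℂ) 2

private lemma single_apply' (i j : ℕ) (c : ℂ) :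
    (lp.single 2 i c : H2) j = if j = i then c else 0 := by
  rw [lp.single_apply]; split <;> simp_all

/-- coordinate evaluation functional -/
private def evalCLM (k : ℕ) : H2 →L[ℂ] ℂ :=
  LinearMap.mkContinuous
    { toFun := fun f => f k
      map_add' := fun f g => rfl
      map_smul' := fun c f => rfl }
    1 (fun f => by
      show ‖(f : ℕ → ℂ) k‖ ≤ 1 * ‖f‖; simpa using lp.norm_apply_le_norm (by norm_num) f k)

@[simp] private lemma evalCLM_apply (k : ℕ) (f : H2) : evalCLM k f = f k := rfl

private lemma adjS_apply (β : ℕ → ℝ) (S : H2 →L[ℂ] H2)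
    (hS : ∀ f : H2, ∀ k : ℕ, S f k = ((β k / β (k + 1) : ℝ) : ℂ) * f (k + 1))
    (h : H2) (k : ℕ) :
    (ContinuousLinearMap.adjoint S) h k =
      if k = 0 then 0 else ((β (k - 1) / β k : ℝ) : ℂ) * h (k - 1) := by
  have h1 : (ContinuousLinearMap.adjoint S) h k
      = @inner ℂ _ _ (lp.single 2 k (1 : ℂ) : H2) ((ContinuousLinearMap.adjoint S) h) := by
    rw [lp.inner_single_left]
    simp [RCLike.inner_apply]
  rw [h1, ContinuousLinearMap.adjoint_inner_right, lp.inner_eq_tsum]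
  have hterm : ∀ j : ℕ, @inner ℂ _ _ ((S (lp.single 2 k 1) : H2) j) (h j)
      = conj (((β j / β (j + 1) : ℝ) : ℂ) * (if j + 1 = k then (1:ℂ) else 0)) * h j := by
    intro j
    rw [RCLike.inner_apply, hS, single_apply']
    exact mul_comm _ _
  rcases k with _ | m
  · rw [if_pos rfl]
    have : ∀ j : ℕ, @inner ℂ _ _ ((S (lp.single 2 0 1) : H2) j) (h j) = 0 := by
      intro j; rw [hterm]; simp
    rw [tsum_congr this, tsum_zero]
  · rw [if_neg (Nat.succ_ne_zero m), tsum_eq_single m]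
    · rw [hterm]; simp [Complex.conj_ofReal]
    · intro j hj
      rw [hterm]
      simp [Nat.succ_injective.ne hj, hj]

end Stmt10Aux

set_option maxHeartbeats 1000000 in
/-- the commutant of `S_β` on `H²_β` (`w_k → 1`) is
`{g(S_β) : g ∈ H^∞_{β⁻¹}}`: a bounded operator `W` commutes with `S_β` iff
`W = T_{β⁻¹,β} M_g* T_{β,β⁻¹}` for some multiplier `g` of `H²_{β⁻¹}`. In the
coefficient ℓ²-models the isometries `T` are the identity, `S_β` acts by
`(S f)(k) = (β_k/β_{k+1}) f(k+1)`, and `M_g` (for `g` with Taylor coefficients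
`a_j`) acts on the `H²_{β⁻¹}`-model by
`(G f)(k) = (1/β_k) Σ_{j≤k} a_j β_{k-j} f(k-j)`; `g ∈ H^∞_{β⁻¹}` is encoded by
the existence of such a bounded operator `G`. -/
theorem stmt_10 (β : ℕ → ℝ) (hβ0 : β 0 = 1) (hβ : ∀ k, 0 < β k)
    (hw : Filter.Tendsto (fun k => β (k + 1) / β k) Filter.atTop (nhds 1))
    (S : lp (fun _ : ℕ => ℂ) 2 →L[ℂ] lp (fun _ : ℕ => ℂ) 2)
    (hS : ∀ f : lp (fun _ : ℕ => ℂ) 2, ∀ k : ℕ,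
      S f k = ((β k / β (k + 1) : ℝ) : ℂ) * f (k + 1))
    (W : lp (fun _ : ℕ => ℂ) 2 →L[ℂ] lp (fun _ : ℕ => ℂ) 2) :
    W ∘L S = S ∘L W ↔
    ∃ (a : ℕ → ℂ) (G : lp (fun _ : ℕ => ℂ) 2 →L[ℂ] lp (fun _ : ℕ => ℂ) 2),
      (∀ f : lp (fun _ : ℕ => ℂ) 2, ∀ k : ℕ,
        G f k = ((1 / β k : ℝ) : ℂ) *
          ∑ j ∈ Finset.range (k + 1), a j * ((β (k - j) : ℝ) : ℂ) * f (k - j)) ∧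
      W = ContinuousLinearMap.adjoint G := by
  have hβne : ∀ k, β k ≠ 0 := fun k => (hβ k).ne'
  have hβCne : ∀ k, ((β k : ℝ) : ℂ) ≠ 0 := fun k => Complex.ofReal_ne_zero.mpr (hβne k)
  constructor
  · -- forward direction
    intro hWS
    set G := ContinuousLinearMap.adjoint W with hGdef
    have hc : (ContinuousLinearMap.adjoint S) ∘L G = G ∘L (ContinuousLinearMap.adjoint S) := by
      have h2 := congrArg ContinuousLinearMap.adjoint hWS
      rwa [ContinuousLinearMap.adjoint_comp, ContinuousLinearMap.adjoint_comp] at h2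
    set a : ℕ → ℂ := fun k => ((β k : ℝ) : ℂ) * G (lp.single 2 0 1) k with ha
    have hsingle : ∀ n k : ℕ, G (lp.single 2 n 1) k =
        if n ≤ k then ((β n / β k : ℝ) : ℂ) * a (k - n) else 0 := by
      intro n
      induction n with
      | zero =>
        intro k
        rw [if_pos (Nat.zero_le k)]
        simp only [Nat.sub_zero, ha, hβ0]
        rw [← mul_assoc, ← Complex.ofReal_mul, one_div, inv_mul_cancel₀ (hβne k),
          Complex.ofReal_one, one_mul]
      | succ n ih =>
        have hs1 : (ContinuousLinearMap.adjoint S) (lp.single 2 n (1:ℂ) : H2)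
            = ((β n / β (n+1) : ℝ) : ℂ) • (lp.single 2 (n+1) (1:ℂ) : H2) := by
          apply lp.ext
          funext j
          rw [adjS_apply β S hS]
          simp only [lp.coeFn_smul, Pi.smul_apply, smul_eq_mul, single_apply']
          rcases j with _ | m
          · simp
          · rw [if_neg (Nat.succ_ne_zero m)]
            simp only [Nat.add_sub_cancel, single_apply']
            by_cases hmn : m = n
            · subst hmn; simp
            · rw [if_neg hmn, if_neg (fun h => hmn (Nat.succ_injective h))]
              simp
        have e1 : (lp.single 2 (n+1) (1:ℂ) : H2)
            = ((β (n+1) / β n : ℝ) : ℂ) •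
                (ContinuousLinearMap.adjoint S) (lp.single 2 n (1:ℂ) : H2) := by
          rw [hs1, smul_smul, ← Complex.ofReal_mul, div_mul_div_comm,
            mul_comm (β (n+1)) (β n), div_self (mul_ne_zero (hβne n) (hβne (n+1))), Complex.ofReal_one, one_smul]
        intro k
        have e2 : G (lp.single 2 (n+1) 1) k
            = ((β (n+1) / β n : ℝ) : ℂ) *
              ((ContinuousLinearMap.adjoint S) (G (lp.single 2 n 1)) : H2) k := by
          rw [e1, map_smul]
          have h3 := congrArg (fun (T : H2 →L[ℂ] H2) => T (lp.single 2 n 1)) hc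
          simp only [ContinuousLinearMap.comp_apply] at h3
          rw [← h3]
          simp [lp.coeFn_smul]
        rw [e2, adjS_apply β S hS]
        rcases k with _ | m
        · simp
        · rw [if_neg (Nat.succ_ne_zero m)]
          simp only [Nat.add_sub_cancel]
          rw [ih m]
          by_cases hnm : n ≤ m
          · rw [if_pos hnm, if_pos (Nat.succ_le_succ hnm)]
            have hsub : m + 1 - (n + 1) = m - n := by omega
            rw [hsub]
            push_cast
            field_simp [hβCne n, hβCne m, hβCne (n+1), hβCne (m+1)]
          · rw [if_neg hnm, if_neg (by omega)]
            simp
    refine ⟨a, G, ?_, by rw [hGdef, ContinuousLinearMap.adjoint_adjoint]⟩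
    intro f k
    set c : ℕ → ℂ := fun j => ((1 / β k : ℝ) : ℂ) * (a j * ((β (k - j) : ℝ) : ℂ)) with hcdef
    set Φ : H2 →L[ℂ] ℂ :=
      (evalCLM k).comp G - ∑ j ∈ Finset.range (k+1), c j • evalCLM (k - j) with hΦ
    have hΦs : ∀ n : ℕ, Φ (lp.single 2 n 1) = 0 := by
      intro n
      simp only [hΦ, ContinuousLinearMap.sub_apply, ContinuousLinearMap.comp_apply,
        ContinuousLinearMap.sum_apply, ContinuousLinearMap.smul_apply, evalCLM_apply,
        smul_eq_mul]
      rw [hsingle n k]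
      by_cases hnk : n ≤ k
      · rw [if_pos hnk]
        rw [Finset.sum_eq_single_of_mem (k - n)
          (Finset.mem_range.mpr (by omega))
          (fun j hj hne => by
            have hjk := Finset.mem_range.mp hj
            rw [single_apply', if_neg (fun h => hne (by omega))]
            ring)]
        rw [single_apply', if_pos (by omega)]
        have hsub : k - (k - n) = n := by omega
        simp only [hcdef, hsub, mul_one]
        rw [sub_eq_zero]
        push_cast
        field_simp [hβCne k]
      · rw [if_neg hnk]
        rw [Finset.sum_eq_zero (fun j hj => by
          rw [single_apply', if_neg (by
            have := Finset.mem_range.mp hj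
            omega)]
          ring)]
        simp
    have hΦf : Φ f = 0 := by
      have hsum := (lp.hasSum_single ENNReal.ofNat_ne_top f).mapL Φ
      have h3 : ∀ i, Φ (lp.single 2 i (f i)) = 0 := by
        intro i
        have : (lp.single 2 i (f i) : H2) = (f i) • (lp.single 2 i (1:ℂ) : H2) := by
          rw [← lp.single_smul]; simp
        rw [this, map_smul, hΦs, smul_zero]
      simp only [h3] at hsum
      exact hsum.unique hasSum_zero
    have hfin : G f k - ∑ j ∈ Finset.range (k+1), c j * f (k - j) = 0 := by
      simpa [hΦ, ContinuousLinearMap.sub_apply, ContinuousLinearMap.comp_apply,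
        ContinuousLinearMap.sum_apply, ContinuousLinearMap.smul_apply, evalCLM_apply,
        smul_eq_mul] using hΦf
    rw [sub_eq_zero] at hfin
    rw [hfin, Finset.mul_sum]
    exact Finset.sum_congr rfl (fun j hj => by rw [hcdef]; ring)
  · -- reverse direction
    rintro ⟨a, G, hG, hW⟩
    rw [hW]
    have hcomm : (ContinuousLinearMap.adjoint S) ∘L G = G ∘L (ContinuousLinearMap.adjoint S) := by
      refine ContinuousLinearMap.ext fun f => ?_
      apply lp.ext
      funext k
      simp only [ContinuousLinearMap.comp_apply]
      have h0 : ((ContinuousLinearMap.adjoint S) f) 0 = 0 := by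
        rw [adjS_apply β S hS, if_pos rfl]
      rcases k with _ | m
      · rw [adjS_apply β S hS, if_pos rfl, hG]
        simp [h0]
      · rw [adjS_apply β S hS, if_neg (Nat.succ_ne_zero m)]
        simp only [Nat.add_sub_cancel]
        rw [hG ((ContinuousLinearMap.adjoint S) f), Finset.sum_range_succ, Nat.sub_self, h0,
          mul_zero, add_zero, hG f m]
        have hterm : ∀ j ∈ Finset.range (m+1),
            a j * ((β (m + 1 - j) : ℝ) : ℂ) *
              ((ContinuousLinearMap.adjoint S) f) (m + 1 - j)
            = a j * ((β (m - j) : ℝ) : ℂ) * f (m - j) := by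
          intro j hj
          have hj' : j ≤ m := Nat.lt_succ_iff.mp (Finset.mem_range.mp hj)
          have h1 : m + 1 - j = (m - j) + 1 := by omega
          rw [h1, adjS_apply β S hS, if_neg (Nat.succ_ne_zero _)]
          simp only [Nat.add_sub_cancel]
          push_cast
          field_simp [hβCne (m - j), hβCne (m - j + 1)]
        rw [Finset.sum_congr rfl hterm, ← mul_assoc, ← Complex.ofReal_mul]
        have hfac : (β m / β (m+1)) * (1 / β m) = 1 / β (m+1) := by
          field_simp [hβne m, hβne (m+1)]
        rw [hfac]
    have h2 := congrArg ContinuousLinearMap.adjoint hcomm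
    rw [ContinuousLinearMap.adjoint_comp, ContinuousLinearMap.adjoint_comp,
      ContinuousLinearMap.adjoint_adjoint] at h2
    exact h2
end

section
/- Let $t\in(0,1)$ and $\varphi(z)=\frac{t-z}{1-tz}$. Then for every integer $N\ge 1$, the $H^2$ norm of $(\varphi')^N$ satisfies $\|(\varphi')^N\|_{H^2}^2 \ge \frac{(1+t)^{2N}}{2\pi(2N-1)(1-t)^{2N-2}}$. In particular $\|(\varphi')^N\|_{H^2}\to\infty$ as $N\to\infty$. -/
open Filter Real

private lemma stmt12_bern {t : ℝ} (ht0 : 0 < t) (ht1 : t < 1) (n : ℕ) :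
    (1-t)^(n+1) + 2*(n+1)*t*(1-t)^n ≤ (1+t)^(n+1) := by
  have ha : (0:ℝ) < 1 - t := by linarith
  have hr : (0:ℝ) ≤ 2*t/(1-t) := by positivity
  have h := one_add_mul_le_pow (a := 2*t/(1-t)) (by linarith) (n+1)
  have e1 : (1-t) * (1 + 2*t/(1-t)) = 1 + t := by field_simp; ring
  have e2 : (1-t)^(n+1) * (1 + ((n:ℝ)+1)*(2*t/(1-t))) = (1-t)^(n+1) + 2*((n:ℝ)+1)*t*(1-t)^n := by
    field_simp
    ring
  calc (1-t)^(n+1) + 2*((n:ℝ)+1)*t*(1-t)^n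
      = (1-t)^(n+1) * (1 + ((n:ℝ)+1)*(2*t/(1-t))) := e2.symm
    _ ≤ (1-t)^(n+1) * (1 + 2*t/(1-t))^(n+1) := by
        apply mul_le_mul_of_nonneg_left _ (by positivity)
        push_cast at h
        exact h
    _ = ((1-t) * (1 + 2*t/(1-t)))^(n+1) := by rw [mul_pow]
    _ = (1+t)^(n+1) := by rw [e1]

set_option maxHeartbeats 1000000 in
private lemma stmt12_alg {C K t v w : ℝ} (ht : t ≠ 0) (hK : K ≠ 0) (hv : v ≠ 0) (hw : w ≠ 0) :
    C / v = -(C/(t*K)) * (-(K*w*t)/(v*w)) := by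
  field_simp

private lemma stmt12_main {t : ℝ} (ht0 : 0 < t) (ht1 : t < 1) (M : ℕ) :
    (1 + t) ^ (2 * (M+1)) / (2 * Real.pi * (2 * ((M:ℝ)+1) - 1) * (1 - t) ^ (2 * M)) ≤
      (1 / (2 * Real.pi)) * ∫ θ in (0:ℝ)..(2 * Real.pi),
        ((1 - t ^ 2) ^ (2 * (M+1))) / ((1 + t ^ 2 - 2 * t * Real.cos θ) ^ (2 * (M+1))) := by
  have hπ : (3:ℝ) < Real.pi := Real.pi_gt_three
  have ha : (0:ℝ) < 1 - t := by linarith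
  have hP : (0:ℝ) < 1 + t := by linarith
  have hd : ∀ θ : ℝ, 0 < 1 + t^2 - 2*t*Real.cos θ := fun θ => by
    nlinarith [Real.cos_le_one θ]
  set f : ℝ → ℝ := fun θ => ((1 - t ^ 2) ^ (2 * (M+1))) / ((1 + t ^ 2 - 2 * t * Real.cos θ) ^ (2 * (M+1))) with hf_def
  set g : ℝ → ℝ := fun θ => ((1 - t ^ 2) ^ (2 * (M+1))) / ((1 - t) + t*θ)^(4*M+4) with hg_def
  have hfc : Continuous f := by
    apply Continuous.div (by continuity) (by continuity)
    intro θ; exact pow_ne_zero _ (hd θ).ne'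
  have h1t2 : (0:ℝ) ≤ 1 - t^2 := by nlinarith
  have hf_nonneg : ∀ θ : ℝ, 0 ≤ f θ := fun θ => by
    simp only [hf_def]
    exact div_nonneg (pow_nonneg h1t2 _) (pow_nonneg (hd θ).le _)
  have h2pi : (2:ℝ) ≤ 2 * Real.pi := by linarith
  -- step 1: restrict the integral to [0,2]
  have hsplit : (∫ θ in (0:ℝ)..2, f θ) ≤ ∫ θ in (0:ℝ)..(2*Real.pi), f θ := by
    rw [← intervalIntegral.integral_add_adjacent_intervals (a := (0:ℝ)) (b := 2) (c := 2*Real.pi)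
      (hfc.intervalIntegrable _ _) (hfc.intervalIntegrable _ _)]
    have htail : 0 ≤ ∫ θ in (2:ℝ)..(2*Real.pi), f θ :=
      intervalIntegral.integral_nonneg h2pi (fun x _ => hf_nonneg x)
    linarith
  -- positivity of the linear denominator on [0,∞)
  have hu : ∀ x : ℝ, 0 ≤ x → 0 < (1 - t) + t*x := fun x hx => by nlinarith
  have hgcont : ContinuousOn g (Set.Icc (0:ℝ) 2) := by
    apply ContinuousOn.div (by fun_prop) (by fun_prop)
    intro x hx
    exact pow_ne_zero _ (hu x hx.1).ne'
  have huIcc : Set.uIcc (0:ℝ) 2 = Set.Icc (0:ℝ) 2 := Set.uIcc_of_le (by norm_num)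
  have hgcont' : ContinuousOn g (Set.uIcc (0:ℝ) 2) := by rw [huIcc]; exact hgcont
  have hgint : IntervalIntegrable g MeasureTheory.volume 0 2 :=
    hgcont'.intervalIntegrable
  -- step 2: pointwise bound on [0,2]
  have hpt : ∀ x ∈ Set.Icc (0:ℝ) 2, g x ≤ f x := by
    intro x hx
    have hcos := Real.one_sub_sq_div_two_le_cos (x := x)
    have h1 : 1 + t^2 - 2*t*Real.cos x ≤ ((1-t) + t*x)^2 := by
      nlinarith [hx.1, hx.2, mul_nonneg (mul_nonneg ht0.le hx.1) (sub_nonneg.2 hx.2),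
        mul_nonneg (mul_nonneg (mul_nonneg ht0.le hx.1) (sub_nonneg.2 hx.2)) ha.le]
    have h2 : (1 + t^2 - 2*t*Real.cos x)^(2*(M+1)) ≤ ((1-t) + t*x)^(4*M+4) := by
      have h3 := pow_le_pow_left₀ (hd x).le h1 (2*(M+1))
      rw [← pow_mul] at h3
      have : 2 * (2*(M+1)) = 4*M+4 := by ring
      rwa [this] at h3
    simp only [hf_def, hg_def]
    exact div_le_div_of_nonneg_left (pow_nonneg h1t2 _) (pow_pos (hd x) _) h2
  have hmono : (∫ θ in (0:ℝ)..2, g θ) ≤ ∫ θ in (0:ℝ)..2, f θ :=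
    intervalIntegral.integral_mono_on (by norm_num) hgint (hfc.intervalIntegrable _ _) hpt
  -- step 3: FTC for g on [0,2]
  set G : ℝ → ℝ := fun θ => -((1 - t^2)^(2*(M+1)) / (t*(4*(M:ℝ)+3))) * (((1-t) + t*θ)^(4*M+3))⁻¹ with hG_def
  have hderiv : ∀ x ∈ Set.uIcc (0:ℝ) 2, HasDerivAt G (g x) x := by
    intro x hx
    rw [huIcc] at hx
    have hux : 0 < (1-t) + t*x := hu x hx.1
    have h1 : HasDerivAt (fun θ : ℝ => (1-t) + t*θ) t x := by
      simpa using ((hasDerivAt_id x).const_mul t).const_add (1-t)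
    have h2 := h1.pow (4*M+3)
    have h3 := h2.inv (pow_ne_zero _ hux.ne')
    have h4 := h3.const_mul (-((1 - t^2)^(2*(M+1)) / (t*(4*(M:ℝ)+3))))
    have hne : ((1-t) + t*x) ≠ 0 := hux.ne'
    have hk : (4*(M:ℝ)+3) ≠ 0 := by positivity
    convert h4 using 1
    case e'_4 => rfl
    case e'_5 => rfl
    case e'_8 => rfl
    rw [show 4*M+3-1 = 4*M+2 by omega]
    rw [show ((4*M+3 : ℕ) : ℝ) = 4*(M:ℝ)+3 by push_cast; ring]
    simp only [Pi.pow_apply]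
    rw [show ((1-t+t*x)^(4*M+3))^2 = (1-t+t*x)^(4*M+4) * (1-t+t*x)^(4*M+2) by
      rw [← pow_mul, ← pow_add]; congr 1; omega]
    simp only [hg_def]
    exact stmt12_alg ht0.ne' hk (pow_ne_zero _ hne) (pow_ne_zero _ hne)
  have hcalc : (∫ θ in (0:ℝ)..2, g θ) = G 2 - G 0 :=
    intervalIntegral.integral_eq_sub_of_hasDerivAt hderiv hgint
  have hval : G 2 - G 0 = (1 - t^2)^(2*(M+1)) / (t*(4*(M:ℝ)+3)) *
      (((1-t)^(4*M+3))⁻¹ - ((1+t)^(4*M+3))⁻¹) := by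
    have e2 : (1-t) + t*2 = 1+t := by ring
    have e0 : (1-t) + t*0 = 1-t := by ring
    simp only [hG_def]
    rw [e2, e0]
    ring
  -- step 4: algebraic lower bound for G 2 - G 0
  have hB := stmt12_bern ht0 ht1 (4*M+2)
  rw [show 4*M+2+1 = 4*M+3 by omega] at hB
  push_cast at hB
  have hBs : (1-t)^(4*M+3) * ((1-t) + 2*(4*(M:ℝ)+3)*t) ≤ (1-t) * (1+t)^(4*M+3) := by
    have h' := mul_le_mul_of_nonneg_left hB ha.le
    calc (1-t)^(4*M+3) * ((1-t) + 2*(4*(M:ℝ)+3)*t)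
        = (1-t) * ((1-t)^(4*M+3) + 2*(4*(M:ℝ)+2+1)*t*(1-t)^(4*M+2)) := by ring
      _ ≤ (1-t) * (1+t)^(4*M+3) := h'
  have hpoly : (1-t) * ((1-t) + 2*(4*(M:ℝ)+3)*t) ≤ 2*(2*(M:ℝ)+1) := by
    nlinarith [sq_nonneg ((8*(M:ℝ)+5)*t - (4*(M:ℝ)+2)), sq_nonneg t,
      sq_nonneg (1-t), mul_nonneg (Nat.cast_nonneg M : (0:ℝ) ≤ M) (sq_nonneg t),
      (Nat.cast_nonneg M : (0:ℝ) ≤ M)]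
  have hs : (0:ℝ) < (1-t) + 2*(4*(M:ℝ)+3)*t := by positivity
  have hPk : (0:ℝ) < (1+t)^(4*M+3) := pow_pos hP _
  have hA : (0:ℝ) < (1-t)^(4*M+3) := pow_pos ha _
  have hdiamond : t*(4*(M:ℝ)+3) * (1-t) * (1+t)^(4*M+3) ≤
      (2*(M:ℝ)+1) * ((1+t)^(4*M+3) - (1-t)^(4*M+3)) := by
    refine le_of_mul_le_mul_right ?_ hs
    calc t*(4*(M:ℝ)+3) * (1-t) * (1+t)^(4*M+3) * ((1-t) + 2*(4*(M:ℝ)+3)*t)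
        = (t*(4*(M:ℝ)+3) * (1+t)^(4*M+3)) * ((1-t) * ((1-t) + 2*(4*(M:ℝ)+3)*t)) := by ring
      _ ≤ (t*(4*(M:ℝ)+3) * (1+t)^(4*M+3)) * (2*(2*(M:ℝ)+1)) := by
          apply mul_le_mul_of_nonneg_left hpoly (by positivity)
      _ = (2*(M:ℝ)+1) * ((1+t)^(4*M+3) * ((1-t) + 2*(4*(M:ℝ)+3)*t)
            - (1-t) * (1+t)^(4*M+3)) := by ring
      _ ≤ (2*(M:ℝ)+1) * ((1+t)^(4*M+3) * ((1-t) + 2*(4*(M:ℝ)+3)*t)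
            - (1-t)^(4*M+3) * ((1-t) + 2*(4*(M:ℝ)+3)*t)) := by
          have h'' := mul_le_mul_of_nonneg_left hBs (show (0:ℝ) ≤ 2*(M:ℝ)+1 by positivity)
          nlinarith [h'']
      _ = (2*(M:ℝ)+1) * ((1+t)^(4*M+3) - (1-t)^(4*M+3)) * ((1-t) + 2*(4*(M:ℝ)+3)*t) := by
          ring
  have hstep : (1+t)^(2*(M+1)) / ((2*((M:ℝ)+1)-1) * (1-t)^(2*M)) ≤ G 2 - G 0 := by
    rw [hval, inv_sub_inv hA.ne' hPk.ne']
    rw [show (1:ℝ) - t^2 = (1-t)*(1+t) from by ring, mul_pow]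
    rw [div_mul_div_comm]
    have hden1 : (0:ℝ) < (2*((M:ℝ)+1)-1) * (1-t)^(2*M) := by
      have h0 : (0:ℝ) ≤ M := Nat.cast_nonneg M
      have h1 := pow_pos ha (2*M)
      nlinarith
    rw [div_le_div_iff₀ hden1 (by positivity)]
    calc (1+t)^(2*(M+1)) * (t*(4*(M:ℝ)+3) * ((1-t)^(4*M+3) * (1+t)^(4*M+3)))
        = (t*(4*(M:ℝ)+3) * (1-t) * (1+t)^(4*M+3)) * ((1-t)^(4*M+2) * (1+t)^(2*(M+1))) := by
          ring
      _ ≤ ((2*(M:ℝ)+1) * ((1+t)^(4*M+3) - (1-t)^(4*M+3))) *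
            ((1-t)^(4*M+2) * (1+t)^(2*(M+1))) := by
          apply mul_le_mul_of_nonneg_right hdiamond (by positivity)
      _ = (1-t)^(2*(M+1)) * (1+t)^(2*(M+1)) * ((1+t)^(4*M+3) - (1-t)^(4*M+3)) *
            ((2*((M:ℝ)+1)-1) * (1-t)^(2*M)) := by ring
  -- put everything together
  have hfinal : (1/(2*Real.pi)) * (G 2 - G 0) ≤
      (1/(2*Real.pi)) * ∫ θ in (0:ℝ)..(2*Real.pi), f θ := by
    apply mul_le_mul_of_nonneg_left _ (by positivity)
    rw [← hcalc]
    exact le_trans hmono hsplit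
  calc (1 + t) ^ (2 * (M+1)) / (2 * Real.pi * (2 * ((M:ℝ)+1) - 1) * (1 - t) ^ (2 * M))
      = (1/(2*Real.pi)) * ((1+t)^(2*(M+1)) / ((2*((M:ℝ)+1)-1) * (1-t)^(2*M))) := by
        rw [div_mul_div_comm, one_mul, mul_assoc]
    _ ≤ (1/(2*Real.pi)) * (G 2 - G 0) := by
        apply mul_le_mul_of_nonneg_left hstep (by positivity)
    _ ≤ _ := hfinal

private lemma stmt12_grow {t : ℝ} (ht0 : 0 < t) (ht1 : t < 1) (M : ℕ) :
    t^2/Real.pi * ((M:ℝ)+1) ≤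
      (1 + t) ^ (2 * (M+1)) / (2 * Real.pi * (2 * ((M:ℝ)+1) - 1) * (1 - t) ^ (2 * M)) := by
  have ha : (0:ℝ) < 1 - t := by linarith
  have hb := stmt12_bern ht0 ht1 M
  push_cast at hb
  have h1 : 2*((M:ℝ)+1)*t*(1-t)^M ≤ (1+t)^(M+1) := by
    have := pow_pos ha (M+1)
    linarith
  have h2 : (2*((M:ℝ)+1)*t*(1-t)^M)^2 ≤ ((1+t)^(M+1))^2 := by
    apply pow_le_pow_left₀ (by positivity) h1 2
  have h3 : 4*((M:ℝ)+1)^2*t^2*(1-t)^(2*M) ≤ (1+t)^(2*(M+1)) := by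
    calc 4*((M:ℝ)+1)^2*t^2*(1-t)^(2*M) = (2*((M:ℝ)+1)*t*(1-t)^M)^2 := by ring
      _ ≤ ((1+t)^(M+1))^2 := h2
      _ = (1+t)^(2*(M+1)) := by rw [← pow_mul]; congr 1; omega
  have hden : (0:ℝ) < 2 * Real.pi * (2 * ((M:ℝ)+1) - 1) * (1 - t) ^ (2 * M) := by
    have h0 : (0:ℝ) ≤ M := Nat.cast_nonneg M
    have h1' := pow_pos ha (2*M)
    have h2' : (0:ℝ) < 2 * ((M:ℝ)+1) - 1 := by linarith
    positivity
  rw [div_mul_eq_mul_div, div_le_div_iff₀ Real.pi_pos hden]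
  nlinarith [mul_le_mul_of_nonneg_left h3 Real.pi_pos.le,
    mul_nonneg (mul_nonneg Real.pi_pos.le
      (by positivity : (0:ℝ) ≤ t^2*(1-t)^(2*M))) (by positivity : (0:ℝ) ≤ (M:ℝ)+1)]

/-- lower bound for the `H²` norm of `(φ')^N`, `φ(z)=(t-z)/(1-tz)`,
expressed via the boundary integral (`|1-te^{iθ}|² = 1+t²-2t cos θ`), and the
consequent divergence of these norms. -/
theorem stmt_12 (t : ℝ) (ht : t ∈ Set.Ioo (0:ℝ) 1) :
    (∀ N : ℕ, 1 ≤ N →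
      (1 + t) ^ (2 * N) / (2 * Real.pi * (2 * (N : ℝ) - 1) * (1 - t) ^ (2 * N - 2)) ≤
        (1 / (2 * Real.pi)) *
          ∫ θ in (0:ℝ)..(2 * Real.pi),
            ((1 - t ^ 2) ^ (2 * N)) / ((1 + t ^ 2 - 2 * t * Real.cos θ) ^ (2 * N))) ∧
    Filter.Tendsto
      (fun N : ℕ =>
        Real.sqrt ((1 / (2 * Real.pi)) *
          ∫ θ in (0:ℝ)..(2 * Real.pi),
            ((1 - t ^ 2) ^ (2 * N)) / ((1 + t ^ 2 - 2 * t * Real.cos θ) ^ (2 * N))))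
      Filter.atTop Filter.atTop := by
  obtain ⟨ht0, ht1⟩ := ht
  have main : ∀ N : ℕ, 1 ≤ N →
      (1 + t) ^ (2 * N) / (2 * Real.pi * (2 * (N : ℝ) - 1) * (1 - t) ^ (2 * N - 2)) ≤
        (1 / (2 * Real.pi)) *
          ∫ θ in (0:ℝ)..(2 * Real.pi),
            ((1 - t ^ 2) ^ (2 * N)) / ((1 + t ^ 2 - 2 * t * Real.cos θ) ^ (2 * N)) := by
    intro N hN
    obtain ⟨M, rfl⟩ : ∃ M, N = M + 1 := ⟨N - 1, by omega⟩
    have h := stmt12_main ht0 ht1 M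
    rw [show 2*(M+1) - 2 = 2*M by omega]
    rw [show ((M+1 : ℕ) : ℝ) = (M:ℝ)+1 by push_cast; ring]
    exact h
  refine ⟨main, ?_⟩
  have hgrow : ∀ N : ℕ, 1 ≤ N → t^2/Real.pi * (N:ℝ) ≤
      (1 / (2 * Real.pi)) *
        ∫ θ in (0:ℝ)..(2 * Real.pi),
          ((1 - t ^ 2) ^ (2 * N)) / ((1 + t ^ 2 - 2 * t * Real.cos θ) ^ (2 * N)) := by
    intro N hN
    obtain ⟨M, rfl⟩ : ∃ M, N = M + 1 := ⟨N - 1, by omega⟩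
    have h := (stmt12_grow ht0 ht1 M).trans (stmt12_main ht0 ht1 M)
    calc t^2/Real.pi * (((M+1 : ℕ)):ℝ) = t^2/Real.pi * ((M:ℝ)+1) := by push_cast; ring
      _ ≤ _ := h
  have hc : 0 < t^2/Real.pi := by positivity
  have hlin : Filter.Tendsto (fun N : ℕ => t^2/Real.pi * (N:ℝ)) Filter.atTop Filter.atTop :=
    Filter.Tendsto.const_mul_atTop hc tendsto_natCast_atTop_atTop
  have hinside : Filter.Tendsto
      (fun N : ℕ => (1 / (2 * Real.pi)) *
        ∫ θ in (0:ℝ)..(2 * Real.pi),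
          ((1 - t ^ 2) ^ (2 * N)) / ((1 + t ^ 2 - 2 * t * Real.cos θ) ^ (2 * N)))
      Filter.atTop Filter.atTop := by
    apply Filter.tendsto_atTop_mono' Filter.atTop ?_ hlin
    filter_upwards [Filter.eventually_ge_atTop 1] with N hN
    exact hgrow N hN
  have hsqrt : Filter.Tendsto Real.sqrt Filter.atTop Filter.atTop := by
    refine Filter.tendsto_atTop_atTop.2 fun b => ⟨b^2, fun x hx => ?_⟩
    calc b ≤ |b| := le_abs_self b
      _ = Real.sqrt (b^2) := (Real.sqrt_sq_eq_abs b).symm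
      _ ≤ Real.sqrt x := Real.sqrt_le_sqrt hx
  exact hsqrt.comp hinside
end
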